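/- Let T ≥ 3 and θ : [T,∞) → [0,∞) be C¹ with sup_{t≥T} tθ(t) < ∞ and θ'(t) = -(3/2)θ(t)² + F(t), where |F(t)| ≤ K₀ t^{-3} for all t ≥ T. Then there exists θ* ∈ ℝ such that θ(t) = θ*/t + R(t) with sup_{t≥T} |R(t)| t² / ln t < ∞. -/

import Mathlib

open Set


lemma aux_hasDeriv (T : ℝ) (θ F : ℝ → ℝ) (hC1 : ContDiffOn ℝ 1 θ (Set.Ici T))
    (hode : ∀ t > T, deriv θ t = -(3 / 2) * (θ t) ^ 2 + F t) :
    ∀ x > T, HasDerivAt θ (-(3 / 2) * (θ x) ^ 2 + F x) x := by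
  intro x hx
  have hmem : Set.Ici T ∈ nhds x := Ici_mem_nhds hx
  have hd : DifferentiableAt ℝ θ x :=
    ((hC1.differentiableOn one_ne_zero) x (le_of_lt hx)).differentiableAt hmem
  rw [← hode x hx]
  exact hd.hasDerivAt

set_option maxHeartbeats 1000000 in
lemma aux_contact (K₀ a x L : ℝ) (hK₀ : 0 < K₀) (ha : 0 < a) (hxa : 0 < x - a)
    (hx : 0 < x) (hL : 0 < L) :
    -(3/2) * ((2/3)/(x - a) + K₀ * L / x^2)^2 + K₀/x^3
      < -(2/3)/(x - a)^2 + K₀/x^3 - 2*K₀*L/x^3 := by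
  have key : (-(2/3)/(x - a)^2 + K₀/x^3 - 2*K₀*L/x^3)
      - (-(3/2) * ((2/3)/(x - a) + K₀ * L / x^2)^2 + K₀/x^3)
      = 2*K₀*L*a/((x-a)*x^3) + (3/2)*K₀^2*L^2/x^4 := by
    field_simp
    ring
  have hpos : 0 < 2*K₀*L*a/((x-a)*x^3) + (3/2)*K₀^2*L^2/x^4 := by positivity
  linarith

/-- Upper barrier: `θ t ≤ (2/3)/(t-a) + K₀ log t / t²` on `[T+1, ∞)`. -/
lemma aux_barrier (T K₀ M : ℝ) (hT : 3 ≤ T) (hK₀ : 0 < K₀) (hM : 1 ≤ M) (θ F : ℝ → ℝ)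
    (hC1 : ContDiffOn ℝ 1 θ (Set.Ici T))
    (hMb : ∀ t ≥ T, t * θ t ≤ M)
    (hode : ∀ t > T, deriv θ t = -(3 / 2) * (θ t) ^ 2 + F t)
    (hF : ∀ t ≥ T, |F t| ≤ K₀ * t ^ (-(3:ℝ))) :
    ∀ t ≥ T + 1, θ t ≤ (2/3)/(t - (T+1)*(1 - 2/(3*M))) + K₀ * Real.log t / t^2 := by
  set T₁ : ℝ := T + 1 with hT₁def
  set a : ℝ := T₁ * (1 - 2/(3*M)) with hadef
  have hM0 : (0:ℝ) < M := by linarith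
  have hT₁4 : (4:ℝ) ≤ T₁ := by simp only [hT₁def]; linarith
  have ha_lt : a < T₁ := by
    have h1 : 0 < 2/(3*M) := by positivity
    have hT₁0 : (0:ℝ) < T₁ := by linarith
    nlinarith
  have ha_pos : 0 < a := by
    have h1 : 2/(3*M) ≤ 2/3 := by
      apply div_le_div_of_nonneg_left (by norm_num) (by norm_num) (by linarith)
    have hT₁0 : (0:ℝ) < T₁ := by linarith
    have : (1:ℝ)/3 ≤ 1 - 2/(3*M) := by linarith
    nlinarith
  -- the barrier and its derivative
  set B : ℝ → ℝ := fun x => (2/3)/(x - a) + K₀ * Real.log x / x^2 with hBdef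
  set B' : ℝ → ℝ := fun x => -(2/3)/(x - a)^2 + K₀/x^3 - 2*K₀*Real.log x/x^3 with hB'def
  have hBderiv : ∀ x, T₁ ≤ x → HasDerivAt B (B' x) x := by
    intro x hx
    have hxa : x - a ≠ 0 := by have := ha_lt; intro h; nlinarith
    have hx0 : (0:ℝ) < x := by linarith
    have h1 : HasDerivAt (fun y : ℝ => (2/3)/(y - a)) (-(2/3)/(x-a)^2) x := by
      have := (((hasDerivAt_id x).sub_const a).inv hxa).const_mul (2/3)
      convert (config := {preTransparency := .default}) this using 1
      simp only [id]
      field_simp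
    have h2 : HasDerivAt (fun y : ℝ => K₀ * Real.log y / y^2)
        ((K₀ * x⁻¹ * x^2 - K₀ * Real.log x * (2*x))/(x^2)^2) x := by
      have hp : HasDerivAt (fun y : ℝ => y^2) (2*x) x := by
        simpa using hasDerivAt_pow 2 x
      exact ((Real.hasDerivAt_log (ne_of_gt hx0)).const_mul K₀).div hp (by positivity)
    have := h1.add h2
    convert (config := {preTransparency := .default}) this using 1
    simp only [hB'def]
    field_simp
    ring
  intro t ht
  -- comparison on [T₁, t]
  have key : ∀ x ∈ Icc T₁ t, θ x ≤ B x := by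
    apply image_le_of_deriv_right_lt_deriv_boundary'
      (f' := fun x => -(3/2) * (θ x)^2 + F x)
    · exact hC1.continuousOn.mono (fun y hy => le_trans (by linarith) hy.1)
    · intro x hx
      exact (aux_hasDeriv T θ F hC1 hode x (by have := hx.1; simp only [hT₁def] at this; linarith)).hasDerivWithinAt
    · -- initial condition
      have hθT₁ : θ T₁ ≤ M / T₁ := by
        have hT₁0 : (0:ℝ) < T₁ := by linarith
        have := hMb T₁ (by simp only [hT₁def]; linarith)
        rw [le_div_iff₀ hT₁0]
        nlinarith [this]
      have heq : M / T₁ = (2/3)/(T₁ - a) := by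
        have hT₁0 : (0:ℝ) < T₁ := by linarith
        have : T₁ - a = 2*T₁/(3*M) := by
          simp only [hadef]; field_simp; ring
        rw [this]
        field_simp
      have hlog : 0 ≤ K₀ * Real.log T₁ / T₁^2 := by
        have : 0 ≤ Real.log T₁ := Real.log_nonneg (by linarith)
        positivity
      simp only [hBdef]
      linarith [heq ▸ hθT₁]
    · exact fun x hx => ((hBderiv x hx.1).continuousAt.continuousWithinAt)
    · exact fun x hx => (hBderiv x hx.1).hasDerivWithinAt
    · -- contact point inequality
      intro x hx hcontact
      have hx0 : (0:ℝ) < x := by linarith [hx.1]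
      have hxa : (0:ℝ) < x - a := by linarith [hx.1, ha_lt]
      have hL : 0 < Real.log x := Real.log_pos (by linarith [hx.1])
      have hFx : F x ≤ K₀ / x^3 := by
        have h1 := hF x (by linarith [hx.1, hT₁4]; )
        have h2 : x ^ (-(3:ℝ)) = (x^3)⁻¹ := by
          rw [Real.rpow_neg hx0.le]
          norm_num
        rw [h2] at h1
        calc F x ≤ |F x| := le_abs_self _
        _ ≤ K₀ * (x^3)⁻¹ := h1
        _ = K₀ / x^3 := by ring
      rw [hcontact]
      have hkey := aux_contact K₀ a x (Real.log x) hK₀ ha_pos hxa hx0 hL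
      simp only [hBdef, hB'def]
      calc -(3/2) * ((2/3)/(x - a) + K₀ * Real.log x / x^2)^2 + F x
          ≤ -(3/2) * ((2/3)/(x - a) + K₀ * Real.log x / x^2)^2 + K₀/x^3 := by linarith
        _ < -(2/3)/(x - a)^2 + K₀/x^3 - 2*K₀*Real.log x/x^3 := hkey
  exact (key t ⟨ht, le_refl t⟩)


lemma aux_anti (T₁ : ℝ) (f f' : ℝ → ℝ) (hd : ∀ x ≥ T₁, HasDerivAt f (f' x) x)
    (h0 : ∀ x > T₁, f' x ≤ 0) : AntitoneOn f (Set.Ici T₁) := by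
  apply antitoneOn_of_deriv_nonpos (convex_Ici T₁)
  · exact fun x hx => (hd x hx).continuousAt.continuousWithinAt
  · intro x hx; rw [interior_Ici] at hx
    exact (hd x hx.le).differentiableAt.differentiableWithinAt
  · intro x hx; rw [interior_Ici] at hx
    rw [(hd x hx.le).deriv]; exact h0 x hx

lemma aux_mono (T₁ : ℝ) (f f' : ℝ → ℝ) (hd : ∀ x ≥ T₁, HasDerivAt f (f' x) x)
    (h0 : ∀ x > T₁, 0 ≤ f' x) : MonotoneOn f (Set.Ici T₁) := by
  apply monotoneOn_of_deriv_nonneg (convex_Ici T₁)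
  · exact fun x hx => (hd x hx).continuousAt.continuousWithinAt
  · intro x hx; rw [interior_Ici] at hx
    exact (hd x hx.le).differentiableAt.differentiableWithinAt
  · intro x hx; rw [interior_Ici] at hx
    rw [(hd x hx.le).deriv]; exact h0 x hx

lemma aux_log_le_two_sqrt (x : ℝ) (hx : 1 ≤ x) : Real.log x ≤ 2 * Real.sqrt x := by
  have h0 : (0:ℝ) < x := by linarith
  have h1 : Real.log (Real.sqrt x) ≤ Real.sqrt x - 1 :=
    Real.log_le_sub_one_of_pos (Real.sqrt_pos.mpr h0)
  have h2 : Real.log (Real.sqrt x) = Real.log x / 2 := Real.log_sqrt h0.le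
  have h3 : 0 ≤ Real.sqrt x := Real.sqrt_nonneg x
  linarith [h2 ▸ h1]

lemma aux_one_le_log (x : ℝ) (hx : 3 ≤ x) : 1 ≤ Real.log x := by
  have h0 : (0:ℝ) < x := by linarith
  rw [Real.le_log_iff_exp_le h0]
  have := Real.exp_one_lt_d9
  linarith

lemma aux_assemble (T T₂ θs Ct : ℝ) (hT : 3 ≤ T) (hT₂ : T ≤ T₂) (θ : ℝ → ℝ)
    (hθc : ContinuousOn θ (Set.Ici T))
    (htail : ∀ t ≥ T₂, |θ t - θs / t| ≤ Ct * Real.log t / t ^ 2) :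
    ∃ C : ℝ, ∀ t ≥ T, |θ t - θs / t| * t ^ 2 / Real.log t ≤ C := by
  have hsub : Set.Icc T T₂ ⊆ Set.Ici T := fun y hy => hy.1
  have hcont : ContinuousOn (fun t => |θ t - θs / t| * t ^ 2 / Real.log t) (Set.Icc T T₂) := by
    apply ContinuousOn.div
    · apply ContinuousOn.mul
      · apply ContinuousOn.abs
        apply (hθc.mono hsub).sub
        exact continuousOn_const.div continuousOn_id
          (fun x hx => ne_of_gt (by linarith [hx.1]))
      · exact (continuous_pow 2).continuousOn
    · exact Real.continuousOn_log.mono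
        (fun x hx => by simp only [Set.mem_compl_iff, Set.mem_singleton_iff]; intro h; rw [h] at hx; linarith [hx.1])
    · exact fun x hx => ne_of_gt (Real.log_pos (by linarith [hx.1]))
  obtain ⟨C₁, hC₁⟩ := isCompact_Icc.exists_bound_of_continuousOn hcont
  refine ⟨max C₁ Ct, fun t ht => ?_⟩
  rcases le_total t T₂ with h1 | h1
  · have h2 := hC₁ t ⟨ht, h1⟩
    rw [Real.norm_eq_abs] at h2
    exact le_trans (le_trans (le_abs_self _) h2) (le_max_left _ _)
  · have hL : 0 < Real.log t := Real.log_pos (by linarith)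
    have ht0 : 0 < t := by linarith
    rw [div_le_iff₀ hL]
    calc |θ t - θs / t| * t ^ 2 ≤ (Ct * Real.log t / t ^ 2) * t ^ 2 :=
        mul_le_mul_of_nonneg_right (htail t h1) (by positivity)
      _ = Ct * Real.log t := by field_simp
      _ ≤ max C₁ Ct * Real.log t := mul_le_mul_of_nonneg_right (le_max_right _ _) hL.le

set_option maxHeartbeats 4000000

/-- Asymptotics for the ODE `θ' = -(3/2)θ² + F` with `|F(t)| ≤ K₀ t^{-3}`:
`θ(t) = θ*/t + O(t^{-2} ln t)`. -/
theorem ode_asymptotics (T K₀ : ℝ) (hT : 3 ≤ T) (hK₀ : 0 < K₀) (θ F : ℝ → ℝ)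
    (hθ0 : ∀ t ≥ T, 0 ≤ θ t)
    (hC1 : ContDiffOn ℝ 1 θ (Set.Ici T))
    (hbdd : ∃ M : ℝ, ∀ t ≥ T, t * θ t ≤ M)
    (hode : ∀ t > T, deriv θ t = -(3 / 2) * (θ t) ^ 2 + F t)
    (hF : ∀ t ≥ T, |F t| ≤ K₀ * t ^ (-(3:ℝ))) :
    ∃ θs : ℝ, ∃ C : ℝ, ∀ t ≥ T, |θ t - θs / t| * t ^ 2 / Real.log t ≤ C := by
  obtain ⟨M₀, hM₀⟩ := hbdd
  set M : ℝ := max M₀ 1 with hMdef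
  have hM1 : (1:ℝ) ≤ M := le_max_right _ _
  have hMb : ∀ t ≥ T, t * θ t ≤ M := fun t ht => (hM₀ t ht).trans (le_max_left _ _)
  have hM0 : (0:ℝ) < M := by linarith
  clear_value M
  set T₁ : ℝ := T + 1 with hT₁def
  have hT₁4 : (4:ℝ) ≤ T₁ := by rw [hT₁def]; linarith
  have hTT₁ : T < T₁ := by rw [hT₁def]; linarith
  clear_value T₁
  set a : ℝ := T₁ * (1 - 2/(3*M)) with hadef
  have ha_lt : a < T₁ := by
    rw [hadef]
    have h1 : 0 < 2/(3*M) := by positivity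
    have hT₁0 : (0:ℝ) < T₁ := by linarith
    nlinarith [mul_pos hT₁0 h1]
  have ha_pos : 0 < a := by
    rw [hadef]
    have h1 : 2/(3*M) ≤ 2/3 :=
      div_le_div_of_nonneg_left (by norm_num) (by norm_num) (by linarith)
    have hT₁0 : (0:ℝ) < T₁ := by linarith
    have h2 : (1:ℝ)/3 ≤ 1 - 2/(3*M) := by linarith
    nlinarith [mul_pos hT₁0 (show (0:ℝ) < 1/3 by norm_num), h2]
  clear_value a
  have hbar : ∀ t ≥ T₁, θ t ≤ (2/3)/(t - a) + K₀ * Real.log t / t^2 := by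
    have := aux_barrier T K₀ M hT hK₀ hM1 θ F hC1 hMb hode hF
    rw [hT₁def, hadef, hT₁def]; exact this
  have hθd := aux_hasDeriv T θ F hC1 hode
  have hθc : ContinuousOn θ (Set.Ici T) := hC1.continuousOn
  -- the primitive of θ and the linearizing substitution u
  set P : ℝ → ℝ := fun t => ∫ s in T₁..t, θ s with hPdef
  have hP : ∀ x, T < x → HasDerivAt P (θ x) x := by
    intro x hx
    have hsub : Set.uIcc T₁ x ⊆ Set.Ici T := by
      intro y hy
      rcases Set.mem_uIcc.mp hy with ⟨h, _⟩ | ⟨h, _⟩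
      · exact le_trans hTT₁.le h
      · exact le_trans hx.le h
    have hint : IntervalIntegrable θ MeasureTheory.volume T₁ x :=
      (hθc.mono hsub).intervalIntegrable
    have hmeas : StronglyMeasurableAtFilter θ (nhds x) :=
      ⟨Set.Ici T, Ici_mem_nhds hx, hθc.aestronglyMeasurable measurableSet_Ici⟩
    exact intervalIntegral.integral_hasDerivAt_right hint hmeas
      (hθc.continuousAt (Ici_mem_nhds hx))
  have hPT₁ : P T₁ = 0 := intervalIntegral.integral_same
  set u : ℝ → ℝ := fun t => Real.exp ((3/2) * P t) with hudef
  have hupos : ∀ x, 0 < u x := fun x => Real.exp_pos _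
  have huT₁ : u T₁ = 1 := by rw [hudef]; simp [hPT₁]
  have hu : ∀ x, T < x → HasDerivAt u (3/2 * θ x * u x) x := by
    intro x hx
    have h1 := ((hP x hx).const_mul (3/2)).exp
    convert h1 using 1
    rw [hudef]; ring
  set v : ℝ → ℝ := fun t => 3/2 * θ t * u t with hvdef
  have hv : ∀ x, T < x → HasDerivAt v (3/2 * F x * u x) x := by
    intro x hx
    have h1 := ((hθd x hx).const_mul (3/2)).mul (hu x hx)
    convert (config := {preTransparency := .default}) h1 using 1
    ring
  have hvnonneg : ∀ x ≥ T₁, 0 ≤ v x := by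
    intro x hx
    rw [hvdef]
    have := hθ0 x (by linarith)
    have := (hupos x).le
    positivity
  have hu1 : ∀ x ≥ T₁, 1 ≤ u x := by
    intro x hx
    have hPx : 0 ≤ P x := by
      rw [hPdef]
      apply intervalIntegral.integral_nonneg hx
      intro y hy
      exact hθ0 y (by linarith [hy.1])
    rw [hudef]
    calc (1:ℝ) = Real.exp 0 := Real.exp_zero.symm
      _ ≤ _ := Real.exp_le_exp.mpr (by positivity)
  -- linear growth bound for u
  set A : ℝ := Real.exp (-Real.log (T₁ - a) + 6*K₀ * (Real.sqrt T₁)⁻¹) with hAdef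
  have hA0 : 0 < A := Real.exp_pos _
  have huA : ∀ x ≥ T₁, u x ≤ A * x := by
    set G : ℝ → ℝ := fun s => 3/2 * P s - Real.log (s - a) + 6*K₀ * (Real.sqrt s)⁻¹
      with hGdef
    have hGd : ∀ x ≥ T₁, HasDerivAt G (3/2 * θ x - 1/(x - a) - 3*K₀/(x * Real.sqrt x)) x := by
      intro x hx
      have hx0 : (0:ℝ) < x := by linarith
      have hxa : (0:ℝ) < x - a := by linarith [ha_lt]
      have hsq : (0:ℝ) < Real.sqrt x := Real.sqrt_pos.mpr hx0
      have h1 := (hP x (by linarith)).const_mul (3/2)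
      have h2 : HasDerivAt (fun s : ℝ => Real.log (s - a)) (1/(x-a)) x := by
        have := ((hasDerivAt_id x).sub_const a).log (ne_of_gt hxa)
        simpa using this
      have h3 : HasDerivAt (fun s : ℝ => 6*K₀ * (Real.sqrt s)⁻¹) (-(3*K₀/(x * Real.sqrt x))) x := by
        have hsd := Real.hasDerivAt_sqrt (ne_of_gt hx0)
        have h4 := (hsd.inv (ne_of_gt hsq)).const_mul (6*K₀)
        convert (config := {preTransparency := .default}) h4 using 1
        rw [Real.sq_sqrt hx0.le]
        field_simp
        all_goals ring
      have := (h1.sub h2).add h3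
      convert (config := {preTransparency := .default}) this using 1
      all_goals ring
    have hG'0 : ∀ x > T₁, 3/2 * θ x - 1/(x - a) - 3*K₀/(x * Real.sqrt x) ≤ 0 := by
      intro x hx
      have hx0 : (0:ℝ) < x := by linarith
      have hxa : (0:ℝ) < x - a := by linarith [ha_lt]
      have hsq : (0:ℝ) < Real.sqrt x := Real.sqrt_pos.mpr hx0
      have hx2 : Real.sqrt x * Real.sqrt x = x := Real.mul_self_sqrt hx0.le
      have hb := hbar x hx.le
      have hlog := aux_log_le_two_sqrt x (by linarith)
      have key : 3/2 * (K₀ * Real.log x / x^2) ≤ 3*K₀/(x*Real.sqrt x) := by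
        have hrw : 3/2 * (K₀ * Real.log x / x^2) = (3/2 * K₀ * Real.log x)/x^2 := by ring
        rw [hrw, div_le_div_iff₀ (by positivity) (by positivity)]
        have h5 : Real.log x * (x*Real.sqrt x) ≤ 2*Real.sqrt x*(x*Real.sqrt x) :=
          mul_le_mul_of_nonneg_right hlog (by positivity)
        have h6 : 2*Real.sqrt x*(x*Real.sqrt x) = 2*x^2 := by
          calc 2*Real.sqrt x*(x*Real.sqrt x) = 2*x*(Real.sqrt x*Real.sqrt x) := by ring
          _ = 2*x*x := by rw [hx2]
          _ = 2*x^2 := by ring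
        have h7 := mul_le_mul_of_nonneg_left (h6 ▸ h5) (by positivity : (0:ℝ) ≤ 3/2*K₀)
        nlinarith [h7]
      have key2 : (3:ℝ)/2 * (2/3/(x-a)) = 1/(x-a) := by field_simp
      nlinarith [hb, key, key2]
    have hGanti : AntitoneOn G (Set.Ici T₁) := aux_anti T₁ G _ hGd hG'0
    intro x hx
    have hx0 : (0:ℝ) < x := by linarith
    have hxa : (0:ℝ) < x - a := by linarith [ha_lt]
    have hTa : (0:ℝ) < T₁ - a := by linarith [ha_lt]
    have h1 : G x ≤ G T₁ := hGanti (Set.self_mem_Ici) hx hx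
    have hGT₁ : G T₁ = -Real.log (T₁ - a) + 6*K₀ * (Real.sqrt T₁)⁻¹ := by
      rw [hGdef]; simp [hPT₁]
    have h6 : 0 ≤ 6*K₀ * (Real.sqrt x)⁻¹ := by positivity
    have h2 : 3/2 * P x ≤ Real.log (x - a) + (-Real.log (T₁ - a) + 6*K₀ * (Real.sqrt T₁)⁻¹) := by
      simp only [hGdef, hPT₁] at h1
      linarith [h1]
    calc u x = Real.exp (3/2 * P x) := rfl
      _ ≤ Real.exp (Real.log (x-a) + (-Real.log (T₁ - a) + 6*K₀ * (Real.sqrt T₁)⁻¹)) :=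
        Real.exp_le_exp.mpr h2
      _ = (x - a) * A := by rw [Real.exp_add, Real.exp_log hxa, hAdef]
      _ ≤ A * x := by
        have hxx : x - a ≤ x := by linarith
        calc (x-a)*A ≤ x*A := mul_le_mul_of_nonneg_right hxx hA0.le
        _ = A*x := by ring
  have hvθ : ∀ t, v t = 3/2 * θ t * u t := fun t => rfl
  clear_value P u v A
  -- bound on the second derivative of u
  set D : ℝ := 3/2 * K₀ * A with hDdef
  have hD0 : 0 < D := by rw [hDdef]; positivity
  clear_value D
  have hw : ∀ x ≥ T₁, |3/2 * F x * u x| ≤ D / x^2 := by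
    intro x hx
    have hx0 : (0:ℝ) < x := by linarith
    have hFx : |F x| ≤ K₀ / x^3 := by
      have h1 := hF x (by linarith)
      have h2 : x ^ (-(3:ℝ)) = (x^3)⁻¹ := by
        rw [← Real.rpow_natCast x 3, ← Real.rpow_neg hx0.le]
        norm_num
      rw [h2] at h1
      calc |F x| ≤ K₀ * (x^3)⁻¹ := h1
        _ = K₀ / x^3 := by ring
    rw [abs_mul, abs_mul, abs_of_nonneg (hupos x).le,
      abs_of_nonneg (by norm_num : (0:ℝ) ≤ 3/2)]
    have h9 : 3/2 * |F x| * u x ≤ 3/2 * (K₀/x^3) * (A*x) := by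
      apply mul_le_mul _ (huA x hx) (hupos x).le (by positivity)
      exact mul_le_mul_of_nonneg_left hFx (by norm_num)
    have h10 : 3/2 * (K₀/x^3) * (A*x) = D/x^2 := by
      rw [hDdef]; field_simp
    linarith
  -- v - D/t is nondecreasing, v + D/t is nonincreasing
  have hDd : ∀ x : ℝ, 0 < x → HasDerivAt (fun t : ℝ => D * t⁻¹) (-(D/x^2)) x := by
    intro x hx0
    have := (hasDerivAt_inv (ne_of_gt hx0)).const_mul D
    convert (config := {preTransparency := .default}) this using 1
    field_simp
  have hgd : ∀ x ≥ T₁, HasDerivAt (fun t => v t - D * t⁻¹) (3/2 * F x * u x + D/x^2) x := by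
    intro x hx
    have := (hv x (by linarith)).sub (hDd x (by linarith))
    convert (config := {preTransparency := .default}) this using 1
    all_goals ring
  have hhd : ∀ x ≥ T₁, HasDerivAt (fun t => v t + D * t⁻¹) (3/2 * F x * u x - D/x^2) x := by
    intro x hx
    have := (hv x (by linarith)).add (hDd x (by linarith))
    convert (config := {preTransparency := .default}) this using 1
    all_goals ring
  have hgmono : MonotoneOn (fun t => v t - D * t⁻¹) (Set.Ici T₁) := by
    apply aux_mono T₁ _ _ hgd
    intro x hx
    have := hw x hx.le
    have := neg_abs_le (3/2 * F x * u x)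
    linarith
  have hhanti : AntitoneOn (fun t => v t + D * t⁻¹) (Set.Ici T₁) := by
    apply aux_anti T₁ _ _ hhd
    intro x hx
    have := hw x hx.le
    have := le_abs_self (3/2 * F x * u x)
    linarith
  -- the limit of v = u'
  set b : ℝ := sSup ((fun t => v t - D * t⁻¹) '' Set.Ici T₁) with hbdef
  have hgh : ∀ s ≥ T₁, v s - D * s⁻¹ ≤ v s + D * s⁻¹ := by
    intro s hs
    have hs0 : (0:ℝ) < s := by linarith
    have : 0 ≤ D * s⁻¹ := by positivity
    linarith
  have hbbd : BddAbove ((fun t => v t - D * t⁻¹) '' Set.Ici T₁) := by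
    refine ⟨v T₁ + D * T₁⁻¹, ?_⟩
    rintro y ⟨s, hs, rfl⟩
    calc v s - D * s⁻¹ ≤ v s + D * s⁻¹ := hgh s hs
      _ ≤ v T₁ + D * T₁⁻¹ := hhanti Set.self_mem_Ici hs hs
  have hgb : ∀ t ≥ T₁, v t - D/t ≤ b := by
    intro t ht
    rw [hbdef, div_eq_mul_inv]
    exact le_csSup hbbd ⟨t, ht, rfl⟩
  have hbh : ∀ t ≥ T₁, b ≤ v t + D/t := by
    intro t ht
    rw [hbdef, div_eq_mul_inv]
    refine csSup_le ⟨v T₁ - D * T₁⁻¹, T₁, Set.self_mem_Ici, rfl⟩ ?_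
    rintro y ⟨s, hs, rfl⟩
    rcases le_total s t with hst | hts
    · calc v s - D * s⁻¹ ≤ v t - D * t⁻¹ := hgmono hs ht hst
        _ ≤ v t + D * t⁻¹ := hgh t ht
    · calc v s - D * s⁻¹ ≤ v s + D * s⁻¹ := hgh s hs
        _ ≤ v t + D * t⁻¹ := hhanti ht hs hts
  have hL1 : ∀ t ≥ T₁, 1 ≤ Real.log t := fun t ht => aux_one_le_log t (by linarith)
  have hFx3 : ∀ x ≥ T₁, |F x| ≤ K₀ * (x^3)⁻¹ := by
    intro x hx
    have hx0 : (0:ℝ) < x := by linarith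
    have h1 := hF x (by linarith)
    have h2 : x ^ (-(3:ℝ)) = (x^3)⁻¹ := by
      rw [← Real.rpow_natCast x 3, ← Real.rpow_neg hx0.le]
      norm_num
    rwa [h2] at h1
  rcases le_or_gt b 0 with hble | hbpos
  · -- Case θ* = 0
    have hvD : ∀ t ≥ T₁, v t ≤ D/t := by
      intro t ht
      have := hgb t ht
      linarith
    have hulog : ∀ t ≥ T₁, u t ≤ 1 + D * Real.log t := by
      have hqd : ∀ x ≥ T₁, HasDerivAt (fun t => u t - D * Real.log t) (v x - D/x) x := by
        intro x hx
        have hx0 : (0:ℝ) < x := by linarith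
        have h1 := (hu x (by linarith)).sub
          ((Real.hasDerivAt_log (ne_of_gt hx0)).const_mul D)
        convert (config := {preTransparency := .default}) h1 using 1
        rw [hvθ]
        field_simp
      have hanti : AntitoneOn (fun t => u t - D * Real.log t) (Set.Ici T₁) := by
        apply aux_anti T₁ _ _ hqd
        intro x hx
        have h2 : v x ≤ D/x := hvD x hx.le
        linarith
      intro t ht
      have h3 := hanti Set.self_mem_Ici ht ht
      simp only [huT₁] at h3
      have h4 : 0 ≤ Real.log T₁ := Real.log_nonneg (by linarith)
      nlinarith [h3, mul_nonneg hD0.le h4]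
    -- v is bounded by the explicit tail integral Φ
    set Φ : ℝ → ℝ := fun x => 3*K₀/4 * (x^2)⁻¹ + 3*K₀*D/8 * ((2*Real.log x + 1) * (x^2)⁻¹)
      with hΦdef
    have hΦd : ∀ x ≥ T₁, HasDerivAt Φ
        (-(3/2 * K₀ * (x^3)⁻¹ + 3/2 * K₀ * D * Real.log x * (x^3)⁻¹)) x := by
      intro x hx
      rw [hΦdef]
      have hx0 : (0:ℝ) < x := by linarith
      have hp : HasDerivAt (fun y : ℝ => y^2) (2*x) x := by simpa using hasDerivAt_pow 2 x
      have hinv := hp.inv (by positivity)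
      have h1 := hinv.const_mul (3*K₀/4)
      have h2 := (((Real.hasDerivAt_log (ne_of_gt hx0)).const_mul 2).add_const 1).mul hinv
      have h3 := h2.const_mul (3*K₀*D/8)
      have h4 := h1.add h3
      convert (config := {preTransparency := .default}) h4 using 1
      simp only [Pi.inv_apply]
      field_simp
      ring
    clear_value Φ
    have hpm : MonotoneOn (fun t => v t - Φ t) (Set.Ici T₁) := by
      apply aux_mono T₁ _ (fun x => 3/2 * F x * u x
        + (3/2 * K₀ * (x^3)⁻¹ + 3/2 * K₀ * D * Real.log x * (x^3)⁻¹))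
      · intro x hx
        have := (hv x (by linarith)).sub (hΦd x hx)
        convert (config := {preTransparency := .default}) this using 1
        ring
      · intro x hx
        have hx0 : (0:ℝ) < x := by linarith
        have hlg : 0 ≤ Real.log x := Real.log_nonneg (by linarith)
        have h5 : |3/2 * F x * u x| ≤ 3/2 * (K₀ * (x^3)⁻¹) * (1 + D*Real.log x) := by
          rw [abs_mul, abs_mul, abs_of_nonneg (hupos x).le,
            abs_of_nonneg (by norm_num : (0:ℝ) ≤ 3/2)]
          apply mul_le_mul _ (hulog x hx.le) (hupos x).le (by positivity)
          exact mul_le_mul_of_nonneg_left (hFx3 x hx.le) (by norm_num)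
        have h6 := neg_abs_le (3/2 * F x * u x)
        have h7 : 3/2 * (K₀ * (x^3)⁻¹) * (1 + D*Real.log x)
            = 3/2 * K₀ * (x^3)⁻¹ + 3/2 * K₀ * D * Real.log x * (x^3)⁻¹ := by ring
        linarith [h5, h6, h7.le]
    have hvΦ : ∀ t ≥ T₁, v t ≤ Φ t := by
      intro t ht
      have ht0 : (0:ℝ) < t := by linarith
      by_contra hcon
      push_neg at hcon
      have hε : 0 < v t - Φ t := by linarith
      set ε : ℝ := v t - Φ t with hεdef
      set s : ℝ := max t (2*D/ε) with hsdef
      have hst : t ≤ s := le_max_left _ _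
      have h4 : 2*D/ε ≤ s := le_max_right _ _
      clear_value ε s
      have hs1 : T₁ ≤ s := le_trans ht hst
      have hs0 : (0:ℝ) < s := by linarith
      have h1 : v t - Φ t ≤ v s - Φ s := hpm ht hs1 hst
      have h2 : v s ≤ D/s := hvD s hs1
      have hΦs : 0 ≤ Φ s := by
        have hlg : 0 ≤ Real.log s := Real.log_nonneg (by linarith)
        simp only [hΦdef]
        have e1 : 0 ≤ 3*K₀/4 * ((s:ℝ)^2)⁻¹ := by positivity
        have e2 : 0 ≤ 3*K₀*D/8 * ((2*Real.log s + 1) * (s^2)⁻¹) := by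
          apply mul_nonneg (by positivity)
          exact mul_nonneg (by linarith) (by positivity)
        linarith
      have h3 : D/s ≤ ε/2 := by
        rw [div_le_div_iff₀ hs0 (by norm_num : (0:ℝ) < 2)]
        calc D*2 = ε*(2*D/ε) := by field_simp
          _ ≤ ε*s := mul_le_mul_of_nonneg_left h4 hε.le
      linarith [hεdef]
    have hθb : ∀ t ≥ T₁, θ t ≤ (3*K₀/4 + 9*K₀*D/8) * Real.log t / t^2 := by
      intro t ht
      have ht0 : (0:ℝ) < t := by linarith
      have hL := hL1 t ht
      have h1 : θ t ≤ v t := by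
        have h2 := hu1 t ht
        have h3 := hθ0 t (by linarith)
        rw [hvθ]
        nlinarith
      have h2 := hvΦ t ht
      have h3 : Φ t ≤ (3*K₀/4 + 9*K₀*D/8) * Real.log t / t^2 := by
        simp only [hΦdef]
        have e0 : (3*K₀/4 + 9*K₀*D/8) * Real.log t / t^2
            = 3*K₀/4*(Real.log t*(t^2)⁻¹) + 9*K₀*D/8*(Real.log t*(t^2)⁻¹) := by
          field_simp
        rw [e0]
        have h5 : (0:ℝ) < (t^2)⁻¹ := by positivity
        have h6 : (1:ℝ)*(t^2)⁻¹ ≤ Real.log t*(t^2)⁻¹ :=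
          mul_le_mul_of_nonneg_right hL h5.le
        have h7 : (2*Real.log t + 1)*(t^2)⁻¹ ≤ (3*Real.log t)*(t^2)⁻¹ :=
          mul_le_mul_of_nonneg_right (by linarith) h5.le
        have h8 := mul_le_mul_of_nonneg_left h6 (by positivity : (0:ℝ) ≤ 3*K₀/4)
        have h9 := mul_le_mul_of_nonneg_left h7 (by positivity : (0:ℝ) ≤ 3*K₀*D/8)
        linarith [h8, h9]
      linarith
    refine ⟨0, ?_⟩
    apply aux_assemble T T₁ 0 (3*K₀/4 + 9*K₀*D/8) hT (by linarith) θ hθc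
    intro t ht
    rw [zero_div, sub_zero, abs_of_nonneg (hθ0 t (by linarith))]
    exact hθb t ht
  · -- Case θ* = 2/3
    have hvb1 : ∀ t ≥ T₁, v t ≤ b + D/t := by
      intro t ht; have := hgb t ht; linarith
    have hvb2 : ∀ t ≥ T₁, b - D/t ≤ v t := by
      intro t ht; have := hbh t ht; linarith
    have hult : ∀ t ≥ T₁, u t ≤ b*t + D*Real.log t + 1 := by
      have hqd : ∀ x ≥ T₁, HasDerivAt (fun t => u t - b*t - D*Real.log t)
          (v x - b - D/x) x := by
        intro x hx
        have hx0 : (0:ℝ) < x := by linarith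
        have h1 := ((hu x (by linarith)).sub ((hasDerivAt_id x).const_mul b)).sub
          ((Real.hasDerivAt_log (ne_of_gt hx0)).const_mul D)
        convert (config := {preTransparency := .default}) h1 using 1
        rw [hvθ]
        field_simp
      have hanti : AntitoneOn (fun t => u t - b*t - D*Real.log t) (Set.Ici T₁) := by
        apply aux_anti T₁ _ _ hqd
        intro x hx
        have h2 := hvb1 x hx.le
        linarith
      intro t ht
      have h3 := hanti Set.self_mem_Ici ht ht
      simp only [huT₁] at h3
      have h4 : 0 ≤ Real.log T₁ := Real.log_nonneg (by linarith)
      nlinarith [h3, mul_nonneg hD0.le h4, mul_nonneg hbpos.le (by linarith : (0:ℝ) ≤ T₁)]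
    have hugt : ∀ t ≥ T₁, b*t - D*Real.log t - b*T₁ ≤ u t := by
      have hqd : ∀ x ≥ T₁, HasDerivAt (fun t => u t - b*t + D*Real.log t)
          (v x - b + D/x) x := by
        intro x hx
        have hx0 : (0:ℝ) < x := by linarith
        have h1 := ((hu x (by linarith)).sub ((hasDerivAt_id x).const_mul b)).add
          ((Real.hasDerivAt_log (ne_of_gt hx0)).const_mul D)
        convert (config := {preTransparency := .default}) h1 using 1
        rw [hvθ]
        field_simp
      have hmono : MonotoneOn (fun t => u t - b*t + D*Real.log t) (Set.Ici T₁) := by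
        apply aux_mono T₁ _ _ hqd
        intro x hx
        have h2 := hvb2 x hx.le
        linarith
      intro t ht
      have h3 := hmono Set.self_mem_Ici ht ht
      simp only [huT₁] at h3
      have h4 : 0 ≤ Real.log T₁ := Real.log_nonneg (by linarith)
      nlinarith [h3, mul_nonneg hD0.le h4]
    set c₆ : ℝ := 1 + b*T₁ with hc₆def
    have hc₆0 : 0 ≤ c₆ := by
      simp only [hc₆def]
      nlinarith [hbpos, hT₁4]
    clear_value c₆
    set T₂ : ℝ := max T₁ (max (4*T₁) ((8*D/b)^2)) with hT₂def
    have hT₂₁ : T₁ ≤ T₂ := le_max_left _ _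
    have hT₂a : 4*T₁ ≤ T₂ := le_trans (le_max_left _ _) (le_max_right _ _)
    have hT₂b : (8*D/b)^2 ≤ T₂ := le_trans (le_max_right _ _) (le_max_right _ _)
    clear_value T₂
    have hu_half : ∀ t ≥ T₂, b*t/2 ≤ u t := by
      intro t ht
      have ht₁ : T₁ ≤ t := le_trans hT₂₁ ht
      have ht4 : 4*T₁ ≤ t := le_trans hT₂a ht
      have htD : (8*D/b)^2 ≤ t := le_trans hT₂b ht
      have ht0 : (0:ℝ) < t := by linarith
      have hsq : Real.sqrt t * Real.sqrt t = t := Real.mul_self_sqrt ht0.le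
      have hlog2 := aux_log_le_two_sqrt t (by linarith)
      have h8 : 8*D/b ≤ Real.sqrt t := by
        have h9 := Real.sqrt_le_sqrt htD
        rwa [Real.sqrt_sq (by positivity)] at h9
      have h8' : 8*D ≤ Real.sqrt t * b := (div_le_iff₀ hbpos).mp h8
      have h9 : D*Real.log t ≤ b*t/4 := by
        nlinarith [mul_le_mul_of_nonneg_left hlog2 hD0.le,
          mul_le_mul_of_nonneg_right h8' (Real.sqrt_nonneg t), hsq]
      have h10 : b*T₁ ≤ b*t/4 := by nlinarith
      linarith [hugt t ht₁]
    have htail : ∀ t ≥ T₂, |θ t - (2/3)/t| ≤ (2*D + c₆) * (4/(3*b)) * Real.log t / t^2 := by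
      intro t ht
      have ht₁ : T₁ ≤ t := le_trans hT₂₁ ht
      have ht0 : (0:ℝ) < t := by linarith
      have hL := hL1 t ht₁
      have hut := hupos t
      have hne : u t ≠ 0 := (hupos t).ne'
      have huh := hu_half t ht
      have hθv : θ t = 2/3 * v t / u t := by
        rw [hvθ]
        field_simp
      have heq : θ t - (2/3)/t = 2/3 * (t * v t - u t) / (t * u t) := by
        rw [hθv]
        field_simp
      have h2 : |t * v t - b * t| ≤ D := by
        have l := hvb1 t ht₁
        have r := hvb2 t ht₁
        have e1 : t*(b + D/t) = b*t + D := by field_simp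
        have e2 : t*(b - D/t) = b*t - D := by field_simp
        have l2 : t * v t ≤ b*t + D := by
          calc t * v t ≤ t * (b + D/t) := mul_le_mul_of_nonneg_left l ht0.le
            _ = b*t + D := e1
        have r2 : b*t - D ≤ t * v t := by
          calc b*t - D = t * (b - D/t) := e2.symm
            _ ≤ t * v t := mul_le_mul_of_nonneg_left r ht0.le
        rw [abs_le]
        constructor <;> linarith
      have h3 : |b*t - u t| ≤ D*Real.log t + c₆ := by
        have l := hult t ht₁
        have r := hugt t ht₁
        simp only [hc₆def]
        rw [abs_le]
        constructor <;> nlinarith [hbpos.le, hT₁4]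
      have h4 : |t * v t - u t| ≤ (2*D + c₆) * Real.log t := by
        calc |t * v t - u t| ≤ |t * v t - b*t| + |b*t - u t| := abs_sub_le _ _ _
          _ ≤ D + (D*Real.log t + c₆) := add_le_add h2 h3
          _ ≤ (2*D + c₆)*Real.log t := by nlinarith [hL, hD0, hc₆0]
      rw [heq, abs_div, abs_mul]
      rw [abs_of_nonneg (by norm_num : (0:ℝ) ≤ 2/3),
        abs_of_pos (by positivity : 0 < t * u t)]
      have h5 : t * (b*t/2) ≤ t * u t := mul_le_mul_of_nonneg_left huh ht0.le
      have h6 : 2/3 * |t*v t - u t| / (t*u t)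
          ≤ 2/3 * ((2*D + c₆)*Real.log t) / (t*(b*t/2)) := by
        apply div_le_div₀ _ (by linarith [h4]) (by positivity) h5
        have h7 := mul_nonneg (show (0:ℝ) ≤ 2*D+c₆ by linarith)
          (show (0:ℝ) ≤ Real.log t by linarith)
        linarith
      calc 2/3 * |t*v t - u t| / (t*u t)
          ≤ 2/3 * ((2*D + c₆)*Real.log t) / (t*(b*t/2)) := h6
        _ = (2*D + c₆) * (4/(3*b)) * Real.log t / t^2 := by
          field_simp
          ring
    refine ⟨2/3, ?_⟩
    exact aux_assemble T T₂ (2/3) ((2*D + c₆)*(4/(3*b))) hT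
      (by linarith [hT₂₁, hTT₁]) θ hθc htail
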